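/- For every real α > 0, every real λ > 0, and every real t > 0, the function s ↦ E_{α,1}(-λ s^α) is differentiable at t with derivative −λ t^{α−1} E_{α,α}(-λ t^α). -/

import Mathlib

open Real Nat

theorem summable_ml {α β : ℝ} (hα : 0 < α) (hβ : 0 < β) {r : ℝ} (hr : 0 ≤ r) :
    Summable (fun k : ℕ => r ^ k / Real.Gamma (α * k + β)) := by
  set b : ℝ := max 1 ((2 * r + 1) ^ (1 / α)) with hb_def
  have hb1 : (1 : ℝ) ≤ b := le_max_left _ _
  have hb0 : (0 : ℝ) < b := lt_of_lt_of_le one_pos hb1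
  have h2r : (0:ℝ) ≤ 2 * r + 1 := by linarith
  have hbα : 2 * r + 1 ≤ b ^ α := by
    have h1 : ((2 * r + 1) ^ (1 / α)) ^ α = 2 * r + 1 := by
      rw [← Real.rpow_mul h2r, one_div, inv_mul_cancel₀ hα.ne', Real.rpow_one]
    calc 2 * r + 1 = ((2 * r + 1) ^ (1 / α)) ^ α := h1.symm
      _ ≤ b ^ α := Real.rpow_le_rpow (Real.rpow_nonneg h2r _) (le_max_right _ _) hα.le
  have hbα0 : (0:ℝ) < b ^ α := Real.rpow_pos_of_pos hb0 _
  obtain ⟨K, hK⟩ := exists_nat_ge ((2 - β) / α)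
  have hKk : ∀ k : ℕ, K ≤ k → (2:ℝ) ≤ α * k + β := by
    intro k hk
    have h1 : (2 - β) / α ≤ (k:ℝ) := hK.trans (by exact_mod_cast hk)
    have h2 := (div_le_iff₀ hα).mp h1
    nlinarith
  set C : ℝ := Real.exp b * b ^ ((2:ℝ) - β) with hC_def
  have key : ∀ k : ℕ, K ≤ k → r ^ k / Real.Gamma (α * k + β) ≤ C * (1/2) ^ k := by
    intro k hk
    set x : ℝ := α * k + β with hx_def
    have hx2 : (2:ℝ) ≤ x := hKk k hk
    have hx0 : (0:ℝ) < x := by linarith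
    have hΓpos : 0 < Real.Gamma x := Real.Gamma_pos_of_pos hx0
    set n : ℕ := ⌊x⌋₊ with hn_def
    have hn2 : 2 ≤ n := Nat.le_floor (by exact_mod_cast hx2)
    have hnx : (n:ℝ) ≤ x := Nat.floor_le hx0.le
    have hxn : x < n + 1 := Nat.lt_floor_add_one x
    have hmono : Real.Gamma n ≤ Real.Gamma x :=
      Real.Gamma_strictMonoOn_Ici.monotoneOn (Set.mem_Ici.mpr (by exact_mod_cast hn2)) (Set.mem_Ici.mpr hx2) hnx
    obtain ⟨m, hm_eq⟩ : ∃ m, n = m + 1 := ⟨n - 1, by omega⟩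
    have hΓn : Real.Gamma n = (m ! : ℝ) := by
      rw [hm_eq]; exact_mod_cast Real.Gamma_nat_eq_factorial m
    have hfac : b ^ m / Real.exp b ≤ (m ! : ℝ) := by
      rw [div_le_iff₀ (Real.exp_pos b)]
      have h := Real.pow_div_factorial_le_exp b hb0.le m
      rw [div_le_iff₀ (by positivity : (0:ℝ) < (m ! : ℝ))] at h
      linarith
    have hm : x - 2 ≤ (m : ℝ) := by
      have : (n:ℝ) = (m:ℝ) + 1 := by exact_mod_cast hm_eq
      linarith
    have hbm : b ^ (x - 2) ≤ (b:ℝ) ^ m := by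
      rw [← Real.rpow_natCast b m]
      exact Real.rpow_le_rpow_of_exponent_le hb1 hm
    set L : ℝ := b ^ (x - 2) / Real.exp b with hL_def
    have hL0 : 0 < L := by positivity
    have hΓlow : L ≤ Real.Gamma x := by
      calc L ≤ b ^ m / Real.exp b := by rw [hL_def]; gcongr
      _ ≤ (m ! : ℝ) := hfac
      _ = Real.Gamma n := hΓn.symm
      _ ≤ Real.Gamma x := hmono
    have hCL : C * (1/2) ^ k * L = ((1/2) * b ^ α) ^ k := by
      have e1 : b ^ ((2:ℝ) - β) * b ^ (x - 2) = b ^ (α * k) := by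
        rw [← Real.rpow_add hb0]; ring_nf; rw [hx_def]; ring_nf
      have e2 : b ^ (α * (k:ℝ)) = (b ^ α) ^ k := by
        rw [Real.rpow_mul hb0.le, Real.rpow_natCast]
      calc C * (1/2) ^ k * L
          = (b ^ ((2:ℝ) - β) * b ^ (x - 2)) * (1/2) ^ k := by
            rw [hC_def, hL_def]; field_simp
        _ = (b ^ α) ^ k * (1/2) ^ k := by rw [e1, e2]
        _ = ((1/2) * b ^ α) ^ k := by rw [← mul_pow]; ring_nf
    calc r ^ k / Real.Gamma x ≤ r ^ k / L := by
          gcongr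
      _ ≤ C * (1/2) ^ k := by
          rw [div_le_iff₀ hL0, hCL]
          exact pow_le_pow_left₀ hr (by linarith) k
  rw [← summable_nat_add_iff K]
  have hgeo : Summable (fun k : ℕ => (C * (1/2:ℝ)^K) * (1/2:ℝ) ^ k) :=
    (summable_geometric_of_lt_one (by norm_num) (by norm_num)).mul_left _
  apply Summable.of_nonneg_of_le _ _ hgeo
  · intro k
    have hpos : (0:ℝ) < α * ((k:ℕ) + K : ℕ) + β := by positivity
    exact div_nonneg (pow_nonneg hr _) (Real.Gamma_pos_of_pos hpos).le
  · intro k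
    calc r ^ (k+K) / Real.Gamma (α * ((k+K : ℕ)) + β) ≤ C * (1/2) ^ (k+K) := key (k+K) (by omega)
      _ = (C * (1/2:ℝ)^K) * (1/2:ℝ) ^ k := by rw [pow_add]; ring


/-- The Mittag-Leffler function `E_{α,β}(x) = ∑_{k=0}^∞ x^k / Γ(αk + β)` for real `x`,
where `1/Γ` is interpreted as its entire extension (Mathlib's `Real.Gamma` vanishes at the
poles, so division yields `0` there). The series converges absolutely for every `x`. -/
noncomputable def mittagLeffler (α β x : ℝ) : ℝ :=
  ∑' k : ℕ, x ^ k / Real.Gamma (α * k + β)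

/-- For `α > 0`, `λ > 0` and `t > 0`, the function `s ↦ E_{α,1}(-λ s^α)` is differentiable
at `t` with derivative `-λ t^{α-1} E_{α,α}(-λ t^α)`. -/
theorem mittagLeffler_hasDerivAt (α : ℝ) (hα : 0 < α) (lam : ℝ) (hlam : 0 < lam)
    (t : ℝ) (ht : 0 < t) :
    HasDerivAt (fun s : ℝ => mittagLeffler α 1 (-lam * s ^ α))
      (-lam * t ^ (α - 1) * mittagLeffler α α (-lam * t ^ α)) t := by
  set u₀ : ℝ := t ^ α with hu₀_def
  have hu₀ : 0 < u₀ := Real.rpow_pos_of_pos ht α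
  set R : ℝ := u₀ + 1 with hR_def
  set c : ℕ → ℝ := fun k => (-lam) ^ k / Real.Gamma (α * k + 1) with hc_def
  set g : ℕ → ℝ → ℝ := fun k u => c k * u ^ k with hg_def
  set g' : ℕ → ℝ → ℝ := fun k u => c k * (k * u ^ (k - 1)) with hg'_def
  set ub : ℕ → ℝ := fun k => lam ^ k / Real.Gamma (α * k + 1) * (k * R ^ (k - 1)) with hub_def
  have hΓpos1 : ∀ k : ℕ, 0 < Real.Gamma (α * k + 1) := fun k =>
    Real.Gamma_pos_of_pos (by positivity)
  have hck : ∀ k : ℕ, |c k| = lam ^ k / Real.Gamma (α * k + 1) := by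
    intro k
    rw [hc_def, abs_div, abs_pow, abs_neg, abs_of_pos hlam, abs_of_pos (hΓpos1 k)]
  -- summability of the bound series
  have hub : Summable ub := by
    rw [← summable_nat_add_iff 1]
    have hbase : Summable (fun k : ℕ => (lam * R) ^ k / Real.Gamma (α * k + α)) :=
      summable_ml hα hα (by positivity)
    apply (hbase.mul_left (lam / α)).congr
    intro k
    have hne : α * k + α ≠ 0 := by positivity
    have hΓne : Real.Gamma (α * k + α) ≠ 0 := (Real.Gamma_pos_of_pos (by positivity)).ne'
    have e : α * ((k + 1 : ℕ) : ℝ) + 1 = (α * k + α) + 1 := by push_cast; ring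
    rw [hub_def]
    simp only
    rw [e, Real.Gamma_add_one hne, Nat.add_sub_cancel]
    push_cast
    rw [mul_pow]
    field_simp
    ring
  -- derivative of each term
  have hderiv : ∀ k : ℕ, ∀ u : ℝ, u ∈ Metric.ball (0:ℝ) R → HasDerivAt (g k) (g' k u) u :=
    fun k u _ => (hasDerivAt_pow k u).const_mul (c k)
  -- bound on each derivative
  have hbound : ∀ k : ℕ, ∀ u : ℝ, u ∈ Metric.ball (0:ℝ) R → ‖g' k u‖ ≤ ub k := by
    intro k u hu
    rw [mem_ball_zero_iff, Real.norm_eq_abs] at hu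
    rw [hg'_def]
    simp only [Real.norm_eq_abs, abs_mul, hck k, abs_of_nonneg (Nat.cast_nonneg k : (0:ℝ) ≤ k),
      abs_pow, hub_def]
    have h1 : |u| ^ (k-1) ≤ R ^ (k-1) := pow_le_pow_left₀ (abs_nonneg u) hu.le _
    have h2 : (0:ℝ) ≤ lam ^ k / Real.Gamma (α * k + 1) := le_of_lt (by positivity)
    calc lam ^ k / Real.Gamma (α * k + 1) * (↑k * |u| ^ (k-1))
        ≤ lam ^ k / Real.Gamma (α * k + 1) * (↑k * R ^ (k-1)) := by gcongr
      _ = _ := rfl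
  -- summability at u₀
  have hg0 : Summable (fun k => g k u₀) := by
    apply Summable.of_abs
    apply (summable_ml hα one_pos (r := lam * u₀) (by positivity)).congr
    intro k
    rw [hg_def]
    simp only
    rw [abs_mul, hck k, abs_pow, abs_of_pos hu₀, mul_pow]
    ring
  have hmem : u₀ ∈ Metric.ball (0:ℝ) R := by
    rw [mem_ball_zero_iff, Real.norm_eq_abs, abs_of_pos hu₀]; linarith
  -- differentiate the series
  have hds : HasDerivAt (fun z => ∑' k, g k z) (∑' k, g' k u₀) u₀ :=
    hasDerivAt_tsum_of_isPreconnected hub Metric.isOpen_ball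
      (convex_ball (0:ℝ) R).isPreconnected hderiv hbound hmem hg0 hmem
  -- chain rule
  have hp : HasDerivAt (fun s : ℝ => s ^ α) (α * t ^ (α - 1)) t :=
    Real.hasDerivAt_rpow_const (Or.inl ht.ne')
  have hcomp := hds.comp t hp
  -- identify the function
  have hfun : (fun s : ℝ => mittagLeffler α 1 (-lam * s ^ α))
      = fun s : ℝ => ∑' k, g k (s ^ α) := by
    funext s
    rw [mittagLeffler]
    apply tsum_congr
    intro k
    rw [hg_def, hc_def]
    simp only
    rw [mul_pow]
    ring
  rw [hfun]
  -- identify the derivative value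
  have hsumg' : Summable (fun k => g' k u₀) :=
    Summable.of_norm_bounded hub (fun k => hbound k u₀ hmem)
  have hval : (∑' k, g' k u₀) * (α * t ^ (α - 1))
      = -lam * t ^ (α - 1) * mittagLeffler α α (-lam * t ^ α) := by
    have hαD : α * (∑' k, g' k u₀) = -lam * mittagLeffler α α (-lam * u₀) := by
      rw [← tsum_mul_left]
      have hS : Summable (fun k => α * g' k u₀) := hsumg'.mul_left α
      rw [Summable.tsum_eq_zero_add hS]
      have h0 : α * g' 0 u₀ = 0 := by simp [hg'_def]
      rw [h0, zero_add, mittagLeffler, ← tsum_mul_left]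
      apply tsum_congr
      intro k
      have hne : α * k + α ≠ 0 := by positivity
      have hΓne : Real.Gamma (α * k + α) ≠ 0 := (Real.Gamma_pos_of_pos (by positivity)).ne'
      have e : α * ((k + 1 : ℕ) : ℝ) + 1 = (α * k + α) + 1 := by push_cast; ring
      rw [hg'_def, hc_def]
      simp only
      rw [e, Real.Gamma_add_one hne, Nat.add_sub_cancel, mul_pow, pow_succ]
      push_cast
      field_simp
    calc (∑' k, g' k u₀) * (α * t ^ (α - 1))
        = (α * (∑' k, g' k u₀)) * t ^ (α - 1) := by ring
      _ = (-lam * mittagLeffler α α (-lam * u₀)) * t ^ (α - 1) := by rw [hαD]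
      _ = -lam * t ^ (α - 1) * mittagLeffler α α (-lam * t ^ α) := by rw [hu₀_def]; ring
  rw [← hval]
  exact hcomp
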